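/- Fix an integer q ≥ 2. As n → ∞, the sum over m from 1 to n-1 of q^{-m/2}/(m(n-m)) equals log(1 + 1/(√q - 1))/n + O(1/n²). -/

import Mathlib

open Filter Asymptotics Real

private lemma bernoulli_aux {t : ℝ} (ht0 : 0 < t) (ht1 : t < 1) (m : ℕ) :
    (1 + (m : ℝ)) * t ^ m ≤ 1 / (1 - t) := by
  have ha : (0:ℝ) ≤ (1 - t) / t := div_nonneg (by linarith) ht0.le
  have h := one_add_mul_le_pow (a := (1 - t) / t) (by linarith) m
  have h1 : (1 + (1 - t) / t) = 1 / t := by field_simp; ring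
  rw [h1, div_pow, one_pow] at h
  have htm : (0:ℝ) < t ^ m := by positivity
  rw [le_div_iff₀ htm] at h
  rw [le_div_iff₀ (by linarith : (0:ℝ) < 1 - t)]
  have hm : (0:ℝ) ≤ (m:ℝ) := Nat.cast_nonneg m
  have hstep : (1 - t) ≤ (1 - t) / t := by
    rw [le_div_iff₀ ht0]; nlinarith
  have h2 : (m:ℝ) * (1 - t) ≤ (m:ℝ) * ((1 - t) / t) :=
    mul_le_mul_of_nonneg_left hstep hm
  have key : ((1:ℝ) + m) * (1 - t) ≤ 1 + (m:ℝ) * ((1 - t) / t) := by nlinarith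
  nlinarith [mul_le_mul_of_nonneg_right key htm.le]

private lemma pow_bound {t : ℝ} (ht0 : 0 < t) (ht1 : t < 1) {n : ℕ} (hn : 1 ≤ n) :
    t ^ n ≤ 1 / ((1 - t) * n) := by
  have hb := bernoulli_aux ht0 ht1 n
  have hn0 : (0:ℝ) < n := by exact_mod_cast hn
  have htn : (0:ℝ) < t ^ n := by positivity
  have h1t : (0:ℝ) < 1 - t := by linarith
  rw [le_div_iff₀ (mul_pos h1t hn0)]
  rw [le_div_iff₀ h1t] at hb
  nlinarith

private lemma tail_bound {r : ℝ} (hr0 : 0 < r) (hr1 : r < 1) {n : ℕ} (hn : 1 ≤ n) :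
    |(∑ m ∈ Finset.Ioo 0 n, r ^ m / m) - (-Real.log (1 - r))| ≤ 1 / ((1 - r) ^ 2 * n) := by
  obtain ⟨N, rfl⟩ : ∃ N, n = N + 1 := ⟨n - 1, by omega⟩
  have hsum : HasSum (fun k : ℕ => r ^ (k + 1) / (k + 1)) (-Real.log (1 - r)) :=
    Real.hasSum_pow_div_log_of_abs_lt_one (by rw [abs_of_pos hr0]; exact hr1)
  have hS := hsum.summable
  have h1r : (0:ℝ) < 1 - r := by linarith
  have hP : (∑ m ∈ Finset.Ioo 0 (N+1), r ^ m / m)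
      = ∑ k ∈ Finset.range N, r ^ (k + 1) / (k + 1) := by
    rw [← Finset.Ico_add_one_left_eq_Ioo, Finset.sum_Ico_eq_sum_range]
    simp only [zero_add, Nat.add_sub_cancel]
    refine Finset.sum_congr rfl fun k _ => ?_
    rw [add_comm 1 k]
    push_cast
    ring_nf
  have hkey := Summable.sum_add_tsum_nat_add (f := fun k : ℕ => r ^ (k + 1) / (k + 1)) N hS
  rw [hsum.tsum_eq] at hkey
  have habs : (∑ m ∈ Finset.Ioo 0 (N+1), r ^ m / m) - (-Real.log (1 - r))
      = -(∑' k : ℕ, r ^ (k + N + 1) / ((k + N : ℕ) + 1)) := by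
    rw [hP]
    linarith [hkey]
  rw [habs, abs_neg]
  have hSt : Summable (fun k : ℕ => r ^ (k + N + 1) / ((k + N : ℕ) + 1 : ℝ)) := by
    have := (summable_nat_add_iff (f := fun k : ℕ => r ^ (k + 1) / (k + 1)) N).mpr hS
    simpa using this
  have hterm : ∀ k : ℕ, r ^ (k + N + 1) / ((k + N : ℕ) + 1 : ℝ) ≤ r ^ (N+1) * r ^ k := by
    intro k
    have h1 : r ^ (k + N + 1) / ((k + N : ℕ) + 1 : ℝ) ≤ r ^ (k + N + 1) :=
      div_le_self (by positivity)
        (by have := Nat.cast_nonneg (α := ℝ) (k + N); linarith)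
    calc r ^ (k + N + 1) / ((k + N : ℕ) + 1 : ℝ) ≤ r ^ (k + N + 1) := h1
      _ = r ^ (N+1) * r ^ k := by ring
  have hgeo : Summable (fun k : ℕ => r ^ (N+1) * r ^ k) :=
    (summable_geometric_of_lt_one hr0.le hr1).mul_left _
  have htail_nonneg : (0:ℝ) ≤ ∑' k : ℕ, r ^ (k + N + 1) / ((k + N : ℕ) + 1 : ℝ) :=
    tsum_nonneg fun k => by positivity
  have htail_le : (∑' k : ℕ, r ^ (k + N + 1) / ((k + N : ℕ) + 1 : ℝ))
      ≤ r ^ (N+1) * (1 - r)⁻¹ := by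
    calc (∑' k : ℕ, r ^ (k + N + 1) / ((k + N : ℕ) + 1 : ℝ))
        ≤ ∑' k : ℕ, r ^ (N+1) * r ^ k := Summable.tsum_le_tsum hterm hSt hgeo
      _ = r ^ (N+1) * (1 - r)⁻¹ := by
          rw [tsum_mul_left, tsum_geometric_of_lt_one hr0.le hr1]
  rw [abs_of_nonneg htail_nonneg]
  have hpb : r ^ (N+1) ≤ 1 / ((1 - r) * ((N:ℝ)+1)) := by
    have := pow_bound hr0 hr1 (n := N+1) (by omega)
    push_cast at this
    exact this
  have hNpos : (0:ℝ) < ((N:ℝ) + 1) := by positivity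
  calc (∑' k : ℕ, r ^ (k + N + 1) / ((k + N : ℕ) + 1 : ℝ))
      ≤ r ^ (N+1) * (1 - r)⁻¹ := htail_le
    _ ≤ (1 / ((1 - r) * (N+1))) * (1 - r)⁻¹ := by
        exact mul_le_mul_of_nonneg_right hpb (by positivity)
    _ = 1 / ((1 - r) ^ 2 * ((N:ℝ)+1)) := by field_simp
    _ = 1 / ((1 - r) ^ 2 * ((N+1 : ℕ) : ℝ)) := by push_cast; ring

private lemma sum_B {t : ℝ} (ht0 : 0 < t) (ht1 : t < 1) {n : ℕ} (hn : 1 ≤ n) :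
    ∑ m ∈ Finset.Ioo 0 n, (t^2) ^ m / ((n:ℝ) - m) ≤ 1 / ((1 - t)^2 * n) := by
  have hn0 : (0:ℝ) < n := by exact_mod_cast hn
  have h1t : (0:ℝ) < 1 - t := by linarith
  have hterm : ∀ m ∈ Finset.Ioo 0 n, (t^2)^m / ((n:ℝ) - m) ≤ t^m / ((1-t) * n) := by
    intro m hm
    obtain ⟨hm0, hmn⟩ := Finset.mem_Ioo.mp hm
    have hm1 : (1:ℝ) ≤ (m:ℝ) := by exact_mod_cast hm0
    have hnm : (1:ℝ) ≤ (n:ℝ) - m := by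
      have : ((m:ℝ) + 1) ≤ n := by exact_mod_cast hmn
      linarith
    have htm : (0:ℝ) < t^m := by positivity
    rw [div_le_div_iff₀ (by linarith) (by positivity)]
    have hsq : (t^2)^m = t^m * t^m := by ring
    rw [hsq]
    have hb := bernoulli_aux ht0 ht1 m
    have hb2 : (1-t) * ((1 + (m:ℝ)) * t^m) ≤ 1 := by
      rw [le_div_iff₀ h1t] at hb; linarith
    have hc : (n:ℝ) ≤ ((n:ℝ) - m) * (1 + m) := by nlinarith
    have hmain : t^m * ((1-t) * n) ≤ (n:ℝ) - m := by
      calc t^m * ((1-t)*n) ≤ t^m * ((1-t) * (((n:ℝ)-m)*(1+m))) := by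
            apply mul_le_mul_of_nonneg_left _ htm.le
            exact mul_le_mul_of_nonneg_left hc h1t.le
        _ = ((n:ℝ)-m) * ((1-t) * ((1+m)*t^m)) := by ring
        _ ≤ ((n:ℝ)-m) * 1 := mul_le_mul_of_nonneg_left hb2 (by linarith)
        _ = (n:ℝ) - m := mul_one _
    nlinarith [hmain, htm]
  calc ∑ m ∈ Finset.Ioo 0 n, (t^2)^m/((n:ℝ)-m) ≤ ∑ m ∈ Finset.Ioo 0 n, t^m/((1-t)*n) :=
        Finset.sum_le_sum hterm
    _ = (∑ m ∈ Finset.Ioo 0 n, t^m) / ((1-t)*n) := by rw [Finset.sum_div]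
    _ ≤ (1-t)⁻¹ / ((1-t)*n) := by
        gcongr
        exact le_of_le_of_eq
            (Summable.sum_le_tsum _ (fun i _ => by positivity) (summable_geometric_of_lt_one ht0.le ht1))
            (tsum_geometric_of_lt_one ht0.le ht1)
    _ = 1/((1-t)^2 * n) := by field_simp

theorem sum_q_pow_neg_half_div (q : ℕ) (hq : 2 ≤ q) :
    (fun n : ℕ => (∑ m ∈ Finset.Ioo 0 n, (q : ℝ) ^ (-(m : ℝ) / 2) / (m * (n - m))) -
      Real.log (1 + 1 / (Real.sqrt q - 1)) / n)
      =O[atTop] (fun n : ℕ => 1 / (n : ℝ) ^ 2) := by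
  have hq1 : (1:ℝ) < q := by exact_mod_cast lt_of_lt_of_le one_lt_two hq
  have hq0 : (0:ℝ) ≤ q := by linarith
  set s := Real.sqrt q with hs
  have hs1 : 1 < s := by
    rw [hs, show (1:ℝ) = Real.sqrt 1 by simp]
    exact Real.sqrt_lt_sqrt zero_le_one hq1
  have hs0 : 0 < s := by linarith
  set r := s⁻¹ with hrdef
  have hr0 : 0 < r := by positivity
  have hr1 : r < 1 := inv_lt_one_of_one_lt₀ hs1
  set t := Real.sqrt r with htdef
  have ht0 : 0 < t := Real.sqrt_pos.mpr hr0
  have ht1 : t < 1 := by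
    rw [htdef, show (1:ℝ) = Real.sqrt 1 by simp]
    exact Real.sqrt_lt_sqrt hr0.le hr1
  have htr : t^2 = r := Real.sq_sqrt hr0.le
  have h1r0 : (0:ℝ) < 1 - r := by linarith
  have hlog : Real.log (1 + 1/(s-1)) = -Real.log (1-r) := by
    have hsne : s ≠ 0 := ne_of_gt hs0
    have hs1ne : s - 1 ≠ 0 := sub_ne_zero.mpr (ne_of_gt hs1)
    have hmul : (1 + 1/(s-1)) * (1 - r) = 1 := by
      rw [hrdef]; field_simp; ring
    rw [eq_inv_of_mul_eq_one_left hmul]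
    exact Real.log_inv _
  have hpow : ∀ m : ℕ, (q:ℝ) ^ (-(m:ℝ)/2) = r ^ m := by
    intro m
    rw [show (-(m:ℝ)/2) = (-(1/2) : ℝ) * (m:ℕ) by push_cast; ring,
      Real.rpow_mul hq0, Real.rpow_natCast,
      Real.rpow_neg hq0, ← Real.sqrt_eq_rpow]
  rw [Asymptotics.isBigO_iff]
  refine ⟨1/(1-r)^2 + 1/(1-t)^2, ?_⟩
  filter_upwards [eventually_ge_atTop 1] with n hn
  have hn0 : (0:ℝ) < n := by exact_mod_cast hn
  have h1r : (0:ℝ) < 1 - r := by linarith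
  have h1t : (0:ℝ) < 1 - t := by linarith
  have hsplit : (∑ m ∈ Finset.Ioo 0 n, (q:ℝ)^(-(m:ℝ)/2)/(m*((n:ℝ)-m)))
      = ((∑ m ∈ Finset.Ioo 0 n, r^m/m) + ∑ m ∈ Finset.Ioo 0 n, r^m/((n:ℝ)-m))/n := by
    rw [← Finset.sum_add_distrib, Finset.sum_div]
    refine Finset.sum_congr rfl fun m hm => ?_
    obtain ⟨hm0, hmn⟩ := Finset.mem_Ioo.mp hm
    have h1 : (0:ℝ) < m := by exact_mod_cast hm0
    have h2 : (m:ℝ) < n := by exact_mod_cast hmn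
    rw [hpow m]
    have hd : (n:ℝ) - m ≠ 0 := by linarith
    field_simp
    ring
  have hT := tail_bound hr0 hr1 hn
  have hB := sum_B ht0 ht1 hn
  rw [htr] at hB
  have hBnn : (0:ℝ) ≤ ∑ m ∈ Finset.Ioo 0 n, r^m/((n:ℝ)-m) := by
    apply Finset.sum_nonneg
    intro m hm
    obtain ⟨hm0, hmn⟩ := Finset.mem_Ioo.mp hm
    have h2 : (m:ℝ) < n := by exact_mod_cast hmn
    have : (0:ℝ) < (n:ℝ) - m := by linarith
    positivity
  simp only [Real.norm_eq_abs]
  rw [hsplit, hlog]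
  set P := ∑ m ∈ Finset.Ioo 0 n, r^m/m with hPdef
  set B := ∑ m ∈ Finset.Ioo 0 n, r^m/((n:ℝ)-m) with hBdef
  have habs1 : |(P + B)/n - (-Real.log (1-r))/n| = |(P - (-Real.log (1-r))) + B| / n := by
    rw [show (P + B)/n - (-Real.log (1-r))/n = ((P - (-Real.log (1-r))) + B)/n by ring,
      abs_div, abs_of_pos hn0]
  calc |(P + B)/n - (-Real.log (1-r))/n| = |(P - (-Real.log (1-r))) + B| / n := habs1
    _ ≤ (|P - (-Real.log (1-r))| + |B|) / n := by gcongr; exact abs_add_le _ _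
    _ ≤ (1/((1-r)^2 * n) + 1/((1-t)^2 * n)) / n := by
        gcongr
        rw [abs_of_nonneg hBnn]
        exact hB
    _ = (1/(1-r)^2 + 1/(1-t)^2) * (1/(n:ℝ)^2) := by field_simp
    _ ≤ (1/(1-r)^2 + 1/(1-t)^2) * |1/(n:ℝ)^2| := by
        gcongr
        exact le_abs_self _
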